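/- Let G be a finite simple graph with edge weights w : E(G) → ℝ, let ∇ ⊆ V(G) and S ⊆ V(G), and let X = ∂(S) ∪ (∇ ∩ S), where ∂(S) is the set of vertices of S having a neighbor in V(G) ∖ S. Let H' be a finite weighted simple graph with V(H') ∩ V(G) = X such that for all u, v ∈ X and every real t: G[S] contains a u–v path all of whose edges have weight less than t if and only if H' contains such a path. Let G' be the weighted graph obtained from G by replacing G[S] by H', i.e., V(G') = (V(G) ∖ (S ∖ X)) ∪ V(H') and E(G') = {e ∈ E(G) : not both endpoints of e lie in S} ∪ E(H'), with weights inherited from G and H' respectively. Then for all u, v ∈ ∇ ∪ ∂(S) and every real t: G contains a u–v path all of whose edges have weight less than t if and only if G' contains such a path. -/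

import Mathlib

open scoped Classical

/-- A finite simple graph on a subset of an ambient vertex type `U`. -/
structure FinGraph (U : Type) where
  verts : Finset U
  G : SimpleGraph U
  support : ∀ ⦃u v : U⦄, G.Adj u v → u ∈ verts ∧ v ∈ verts

/-- The restriction (induced subgraph) of a `SimpleGraph` to a finite vertex set. -/
def SimpleGraph.restrictTo {U : Type} (G : SimpleGraph U) (s : Finset U) : SimpleGraph U where
  Adj u v := G.Adj u v ∧ u ∈ s ∧ v ∈ s
  symm := ⟨fun u v h => ⟨h.1.symm, h.2.2, h.2.1⟩⟩
  loopless := ⟨fun u h => G.irrefl h.1⟩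

/-- The boundary `∂(S)` of `S` in `G`: vertices of `S` with a neighbor outside `S`. -/
noncomputable def FinGraph.bdry {U : Type} [DecidableEq U] (G : FinGraph U) (S : Finset U) :
    Finset U :=
  S.filter fun v => ∃ u, G.G.Adj v u ∧ u ∉ S

/-- `G` contains a `u`–`v` path all of whose edges have weight (under `w`) less than `t`. -/
def BottleneckConn {U : Type} (G : SimpleGraph U) (w : Sym2 U → ℝ) (u v : U) (t : ℝ) : Prop :=
  ∃ p : G.Walk u v, p.IsPath ∧ ∀ e ∈ p.edges, w e < t

namespace BottleneckAux

variable {U : Type}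

/-- Walk-based version of bottleneck connectivity. -/
def WConn (G : SimpleGraph U) (w : Sym2 U → ℝ) (u v : U) (t : ℝ) : Prop :=
  ∃ p : G.Walk u v, ∀ e ∈ p.edges, w e < t

lemma bottleneck_iff_wconn {G : SimpleGraph U} {w : Sym2 U → ℝ} {u v : U} {t : ℝ} :
    BottleneckConn G w u v t ↔ WConn G w u v t :=
  ⟨fun ⟨p, _, h⟩ => ⟨p, h⟩,
   fun ⟨p, h⟩ => ⟨p.bypass, p.bypass_isPath, fun e he => h e (p.edges_bypass_subset he)⟩⟩

lemma wconn_mono {G₁ G₂ : SimpleGraph U} {w₁ w₂ : Sym2 U → ℝ}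
    (hle : G₁ ≤ G₂) (hw : ∀ e ∈ G₁.edgeSet, w₂ e = w₁ e) {u v : U} {t : ℝ} :
    WConn G₁ w₁ u v t → WConn G₂ w₂ u v t := by
  rintro ⟨p, hp⟩
  refine ⟨p.transfer G₂ (fun e he => SimpleGraph.edgeSet_mono hle (p.edges_subset_edgeSet he)),
    fun e he => ?_⟩
  rw [SimpleGraph.Walk.edges_transfer] at he
  rw [hw e (p.edges_subset_edgeSet he)]
  exact hp e he

/-- Forward direction: walks in `G` between good vertices transfer to `G'`. -/
lemma fwdAux [DecidableEq U] (G G' : SimpleGraph U) (w w' : Sym2 U → ℝ)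
    (S X : Finset U) (hXS : X ⊆ S)
    (hbd : ∀ ⦃a x : U⦄, G.Adj a x → a ∈ S → x ∉ S → a ∈ X)
    (hGE : ∀ ⦃a x : U⦄, G.Adj a x → ¬(a ∈ S ∧ x ∈ S) → G'.Adj a x ∧ w' s(a, x) = w s(a, x))
    (hT : ∀ u ∈ X, ∀ a ∈ X, ∀ t : ℝ,
      WConn (G.restrictTo S) w u a t → WConn G' w' u a t)
    (t : ℝ) :
    ∀ n : ℕ, ∀ {a v : U} (p : G.Walk a v), p.length = n → (∀ e ∈ p.edges, w e < t) →
      (v ∉ S ∨ v ∈ X) →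
      ((a ∉ S → WConn G' w' a v t) ∧
       (a ∈ S → ∀ u ∈ X, WConn (G.restrictTo S) w u a t → WConn G' w' u v t)) := by
  intro n
  induction n using Nat.strong_induction_on with
  | _ n IH =>
    intro a v p hlen hpw hv
    cases p with
    | nil =>
      refine ⟨fun _ => ⟨.nil, by simp⟩, fun haS u hu hconn => ?_⟩
      have hvX : a ∈ X := hv.resolve_left (fun h => h haS)
      exact hT u hu a hvX t hconn
    | cons h q =>
      rename_i x
      rw [SimpleGraph.Walk.length_cons] at hlen
      have hax : w s(a, x) < t := hpw _ (by simp)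
      have hq : ∀ e ∈ q.edges, w e < t := fun e he => hpw e (by simp [he])
      have IH' := IH q.length (by omega) q rfl hq hv
      constructor
      · intro ha
        obtain ⟨hadj', hwe⟩ := hGE h (fun hc => ha hc.1)
        have hxv : WConn G' w' x v t := by
          by_cases hx : x ∈ S
          · exact IH'.2 hx x (hbd h.symm hx ha) ⟨.nil, by simp⟩
          · exact IH'.1 hx
        obtain ⟨p', hp'⟩ := hxv
        refine ⟨.cons hadj' p', fun e he => ?_⟩
        rw [SimpleGraph.Walk.edges_cons, List.mem_cons] at he
        rcases he with rfl | he
        · rw [hwe]; exact hax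
        · exact hp' e he
      · intro haS u hu hconn
        by_cases hx : x ∈ S
        · obtain ⟨p₀, hp₀⟩ := hconn
          refine IH'.2 hx u hu ⟨p₀.append (.cons ⟨h, haS, hx⟩ .nil), fun e he => ?_⟩
          rw [SimpleGraph.Walk.edges_append, List.mem_append] at he
          rcases he with he | he
          · exact hp₀ e he
          · change e ∈ [s(a, x)] at he
            simp only [SimpleGraph.Walk.edges_cons, SimpleGraph.Walk.edges_nil,
              List.mem_cons, List.not_mem_nil, or_false] at he
            subst he; exact hax
        · have haX : a ∈ X := hbd h haS hx
          obtain ⟨p₁, hp₁⟩ := hT u hu a haX t hconn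
          obtain ⟨hadj', hwe⟩ := hGE h (fun hc => hx hc.2)
          obtain ⟨p₂, hp₂⟩ := IH'.1 hx
          refine ⟨p₁.append (.cons hadj' p₂), fun e he => ?_⟩
          rw [SimpleGraph.Walk.edges_append, List.mem_append] at he
          rcases he with he | he
          · exact hp₁ e he
          · rw [SimpleGraph.Walk.edges_cons, List.mem_cons] at he
            rcases he with rfl | he
            · rw [hwe]; exact hax
            · exact hp₂ e he

/-- Backward direction: walks in `G'` between good vertices transfer to `G`. -/
lemma bwdAux [DecidableEq U] (G G' H' : SimpleGraph U) (w w' wH : Sym2 U → ℝ)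
    (S X VG VH : Finset U) (hXS : X ⊆ S) (hXH : X ⊆ VH)
    (hGsupp : ∀ ⦃a b : U⦄, G.Adj a b → a ∈ VG ∧ b ∈ VG)
    (hHsupp : ∀ ⦃a b : U⦄, H'.Adj a b → a ∈ VH ∧ b ∈ VH)
    (hmeet : ∀ ⦃a : U⦄, a ∈ VH → a ∈ VG → a ∈ X)
    (hbd : ∀ ⦃a x : U⦄, G.Adj a x → a ∈ S → x ∉ S → a ∈ X)
    (hadj : ∀ ⦃a b : U⦄, G'.Adj a b → (G.Adj a b ∧ ¬(a ∈ S ∧ b ∈ S)) ∨ H'.Adj a b)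
    (hw'G : ∀ ⦃a b : U⦄, G.Adj a b → ¬(a ∈ S ∧ b ∈ S) → w' s(a, b) = w s(a, b))
    (hw'H : ∀ e ∈ H'.edgeSet, w' e = wH e)
    (hT : ∀ u ∈ X, ∀ a ∈ X, ∀ t : ℝ, WConn H' wH u a t → WConn G w u a t)
    (t : ℝ) :
    ∀ n : ℕ, ∀ {a v : U} (p : G'.Walk a v), p.length = n → (∀ e ∈ p.edges, w' e < t) →
      ((v ∈ VG ∧ v ∉ S) ∨ v ∈ X) →
      ((a ∈ VG ∧ a ∉ S → WConn G w a v t) ∧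
       (a ∈ VH → ∀ u ∈ X, WConn H' wH u a t → WConn G w u v t)) := by
  intro n
  induction n using Nat.strong_induction_on with
  | _ n IH =>
    intro a v p hlen hpw hv
    cases p with
    | nil =>
      refine ⟨fun _ => ⟨.nil, by simp⟩, fun haH u hu hconn => ?_⟩
      have hvX : a ∈ X := by
        rcases hv with ⟨hvG, hvS⟩ | hvX
        · exact absurd (hXS (hmeet haH hvG)) hvS
        · exact hvX
      exact hT u hu a hvX t hconn
    | cons h q =>
      rename_i x
      rw [SimpleGraph.Walk.length_cons] at hlen
      have hax : w' s(a, x) < t := hpw _ (by simp)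
      have hq : ∀ e ∈ q.edges, w' e < t := fun e he => hpw e (by simp [he])
      have IH' := IH q.length (by omega) q rfl hq hv
      constructor
      · rintro ⟨haG, haS⟩
        rcases hadj h with ⟨hG, hnb⟩ | hH
        · have hwe : w s(a, x) < t := by rw [← hw'G hG hnb]; exact hax
          have hxG : x ∈ VG := (hGsupp hG).2
          have hxv : WConn G w x v t := by
            by_cases hx : x ∈ S
            · exact IH'.2 (hXH (hbd hG.symm hx haS)) x (hbd hG.symm hx haS) ⟨.nil, by simp⟩
            · exact IH'.1 ⟨hxG, hx⟩
          obtain ⟨p', hp'⟩ := hxv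
          refine ⟨.cons hG p', fun e he => ?_⟩
          rw [SimpleGraph.Walk.edges_cons, List.mem_cons] at he
          rcases he with rfl | he
          · exact hwe
          · exact hp' e he
        · exact absurd (hXS (hmeet (hHsupp hH).1 haG)) haS
      · intro haH u hu hconn
        rcases hadj h with ⟨hG, hnb⟩ | hH
        · have haX : a ∈ X := hmeet haH (hGsupp hG).1
          have hxS : x ∉ S := fun hx => hnb ⟨hXS haX, hx⟩
          have hwe : w s(a, x) < t := by rw [← hw'G hG hnb]; exact hax
          obtain ⟨p₁, hp₁⟩ := hT u hu a haX t hconn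
          obtain ⟨p₂, hp₂⟩ := IH'.1 ⟨(hGsupp hG).2, hxS⟩
          refine ⟨p₁.append (.cons hG p₂), fun e he => ?_⟩
          rw [SimpleGraph.Walk.edges_append, List.mem_append] at he
          rcases he with he | he
          · exact hp₁ e he
          · rw [SimpleGraph.Walk.edges_cons, List.mem_cons] at he
            rcases he with rfl | he
            · exact hwe
            · exact hp₂ e he
        · have hwe : wH s(a, x) < t := by
            rw [← hw'H _ ((H'.mem_edgeSet).mpr hH)]; exact hax
          obtain ⟨p₀, hp₀⟩ := hconn
          refine IH'.2 (hHsupp hH).2 u hu ⟨p₀.append (.cons hH .nil), fun e he => ?_⟩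
          rw [SimpleGraph.Walk.edges_append, List.mem_append] at he
          rcases he with he | he
          · exact hp₀ e he
          · simp only [SimpleGraph.Walk.edges_cons, SimpleGraph.Walk.edges_nil,
              List.mem_cons, List.not_mem_nil, or_false] at he
            subst he; exact hwe

end BottleneckAux

/-- for `X = ∂(S) ∪ (∇ ∩ S)`, replacing `G[S]` by a weighted graph `H'`
(with `V(H') ∩ V(G) = X`) having the same bottleneck connectivity on `X` as `G[S]`
preserves bottleneck connectivity between all vertices of `∇ ∪ ∂(S)`. -/
theorem replace_subgraph_keeps_bottleneck {U : Type} [DecidableEq U]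
    (G : FinGraph U) (w : Sym2 U → ℝ)
    (nab S : Finset U) (hnab : nab ⊆ G.verts) (hS : S ⊆ G.verts)
    (H' : FinGraph U) (wH : Sym2 U → ℝ)
    (hHG : H'.verts ∩ G.verts = G.bdry S ∪ (nab ∩ S))
    (hHeq : ∀ u ∈ G.bdry S ∪ (nab ∩ S), ∀ v ∈ G.bdry S ∪ (nab ∩ S), ∀ t : ℝ,
      BottleneckConn (G.G.restrictTo S) w u v t ↔ BottleneckConn H'.G wH u v t)
    (G' : FinGraph U) (w' : Sym2 U → ℝ)
    (hG'verts : G'.verts = (G.verts \ (S \ (G.bdry S ∪ (nab ∩ S)))) ∪ H'.verts)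
    (hG'adj : ∀ a b : U, G'.G.Adj a b ↔
      ((G.G.Adj a b ∧ ¬(a ∈ S ∧ b ∈ S)) ∨ H'.G.Adj a b))
    -- weights are inherited from `G` and from `H'` respectively
    (hw'G : ∀ ⦃a b : U⦄, G.G.Adj a b → ¬(a ∈ S ∧ b ∈ S) → w' s(a, b) = w s(a, b))
    (hw'H : ∀ e ∈ H'.G.edgeSet, w' e = wH e)
    (u v : U) (hu : u ∈ nab ∪ G.bdry S) (hv : v ∈ nab ∪ G.bdry S) (t : ℝ) :
    BottleneckConn G.G w u v t ↔ BottleneckConn G'.G w' u v t := by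
  classical
  open BottleneckAux in
  set X : Finset U := G.bdry S ∪ (nab ∩ S) with hX
  have hXS : X ⊆ S := by
    intro a ha
    rcases Finset.mem_union.mp ha with h | h
    · exact (Finset.mem_filter.mp h).1
    · exact (Finset.mem_inter.mp h).2
  have hbd : ∀ ⦃a x : U⦄, G.G.Adj a x → a ∈ S → x ∉ S → a ∈ X := by
    intro a x hadj haS hxS
    exact Finset.mem_union_left _ (Finset.mem_filter.mpr ⟨haS, x, hadj, hxS⟩)
  have hXH : X ⊆ H'.verts := fun a ha =>
    (Finset.mem_inter.mp (hHG ▸ ha : a ∈ H'.verts ∩ G.verts)).1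
  have hmeet : ∀ ⦃a : U⦄, a ∈ H'.verts → a ∈ G.verts → a ∈ X := fun a h1 h2 =>
    hHG ▸ Finset.mem_inter.mpr ⟨h1, h2⟩
  have hleH : H'.G ≤ G'.G := fun a b h => (hG'adj a b).mpr (Or.inr h)
  have hleR : G.G.restrictTo S ≤ G.G := fun a b h => h.1
  -- transfer of bottleneck connectivity on X, in both directions
  have hT1 : ∀ u ∈ X, ∀ a ∈ X, ∀ t : ℝ,
      WConn (G.G.restrictTo S) w u a t → WConn G'.G w' u a t := by
    intro u hu a ha t hc
    have := (hHeq u hu a ha t).mp (bottleneck_iff_wconn.mpr hc)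
    exact wconn_mono hleH hw'H (bottleneck_iff_wconn.mp this)
  have hT2 : ∀ u ∈ X, ∀ a ∈ X, ∀ t : ℝ,
      WConn H'.G wH u a t → WConn G.G w u a t := by
    intro u hu a ha t hc
    have := (hHeq u hu a ha t).mpr (bottleneck_iff_wconn.mpr hc)
    exact wconn_mono hleR (fun e _ => rfl) (bottleneck_iff_wconn.mp this)
  have hGE : ∀ ⦃a x : U⦄, G.G.Adj a x → ¬(a ∈ S ∧ x ∈ S) →
      G'.G.Adj a x ∧ w' s(a, x) = w s(a, x) := fun a x h hn =>
    ⟨(hG'adj a x).mpr (Or.inl ⟨h, hn⟩), hw'G h hn⟩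
  -- goodness of u and v
  have hgood : ∀ z ∈ nab ∪ G.bdry S, (z ∉ S ∨ z ∈ X) ∧ z ∈ G.verts ∧ (z ∈ S → z ∈ X) := by
    intro z hz
    rcases Finset.mem_union.mp hz with h | h
    · refine ⟨?_, hnab h, fun hzS => Finset.mem_union_right _ (Finset.mem_inter.mpr ⟨h, hzS⟩)⟩
      by_cases hzS : z ∈ S
      · exact Or.inr (Finset.mem_union_right _ (Finset.mem_inter.mpr ⟨h, hzS⟩))
      · exact Or.inl hzS
    · exact ⟨Or.inr (Finset.mem_union_left _ h), hS (Finset.mem_filter.mp h).1,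
        fun _ => Finset.mem_union_left _ h⟩
  obtain ⟨hugood, huG, huX⟩ := hgood u hu
  obtain ⟨hvgood, hvG, hvX⟩ := hgood v hv
  rw [bottleneck_iff_wconn, bottleneck_iff_wconn]
  constructor
  · rintro ⟨p, hp⟩
    have := fwdAux G.G G'.G w w' S X hXS hbd hGE hT1 t p.length p rfl hp hvgood
    by_cases huS : u ∈ S
    · exact this.2 huS u (huX huS) ⟨.nil, by simp⟩
    · exact this.1 huS
  · rintro ⟨p, hp⟩
    have := bwdAux G.G G'.G H'.G w w' wH S X G.verts H'.verts hXS hXH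
      G.support H'.support hmeet hbd (fun a b h => (hG'adj a b).mp h) hw'G hw'H hT2
      t p.length p rfl hp (by
        by_cases hvS : v ∈ S
        · exact Or.inr (hvX hvS)
        · exact Or.inl ⟨hvG, hvS⟩)
    by_cases huS : u ∈ S
    · exact this.2 (hXH (huX huS)) u (huX huS) ⟨.nil, by simp⟩
    · exact this.1 ⟨huG, huS⟩
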